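/- For M an (A,B)-Yetter-Drinfeld Hom-module and N a (C,D)-Yetter-Drinfeld Hom-module, the braiding c_{M,N}(m⊗n) = ν(n₍₀₎) ⊗ B⁻¹(n₍₁₎)·μ⁻¹(m) is H-colinear: ρ_{ᴹN⊗M}(c_{M,N}(m⊗n)) = (c_{M,N}⊗id)ρ_{M⊗N}(m⊗n), where ρ_{M⊗N}(m⊗n) = (m₍₀₎⊗n₍₀₎)⊗n₍₁₎m₍₁₎ and the coaction on ᴹN is n ↦ n₍₀₎⊗AB⁻¹(n₍₁₎). -/
import Mathlib


open TensorProduct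


section Reps

variable {k : Type*} [Field k] {P Q : Type*} [AddCommGroup P] [Module k P]
  [AddCommGroup Q] [Module k Q]

lemma exists_rep (w : P ⊗[k] Q) :
    ∃ (q : ℕ) (f : Fin q → P) (g : Fin q → Q), w = ∑ i, f i ⊗ₜ[k] g i := by
  induction w using TensorProduct.induction_on with
  | zero => exact ⟨0, ![], ![], by simp⟩
  | tmul p q => exact ⟨1, ![p], ![q], by simp⟩
  | add u v hu hv =>
    obtain ⟨q1, f1, g1, h1⟩ := hu
    obtain ⟨q2, f2, g2, h2⟩ := hv
    refine ⟨q1 + q2, Fin.append f1 f2, Fin.append g1 g2, ?_⟩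
    rw [Fin.sum_univ_add]
    simp [Fin.append_left, Fin.append_right, h1, h2]

lemma exists_rep_pad {q : ℕ} (f : Fin q → P) (g : Fin q → Q) {p : ℕ} (hqp : q ≤ p) :
    ∃ (f' : Fin p → P) (g' : Fin p → Q),
      ∑ i, f i ⊗ₜ[k] g i = ∑ j, f' j ⊗ₜ[k] g' j := by
  refine ⟨fun j => if h : (j : ℕ) < q then f ⟨j, h⟩ else 0,
    fun j => if h : (j : ℕ) < q then g ⟨j, h⟩ else 0, ?_⟩
  set G : ℕ → P ⊗[k] Q := fun jj => if h : jj < q then f ⟨jj, h⟩ ⊗ₜ[k] g ⟨jj, h⟩ else 0 with hG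
  have key : ∀ j : Fin p,
      (if h : (j : ℕ) < q then f ⟨j, h⟩ else 0) ⊗ₜ[k]
        (if h : (j : ℕ) < q then g ⟨j, h⟩ else 0) = G (j : ℕ) := by
    intro j
    by_cases h : (j : ℕ) < q
    · simp [hG, h]
    · simp [hG, h]
  calc ∑ i : Fin q, f i ⊗ₜ[k] g i
      = ∑ i : Fin q, G (i : ℕ) := Finset.sum_congr rfl (fun i _ => by simp [hG])
    _ = ∑ jj ∈ Finset.range q, G jj := Fin.sum_univ_eq_sum_range G q
    _ = ∑ jj ∈ Finset.range p, G jj := Finset.sum_subset (Finset.range_subset_range.2 hqp)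
        (by intro j _ hj; simp only [Finset.mem_range, not_lt] at hj; simp [hG, not_lt.2 hj])
    _ = ∑ j : Fin p, G (j : ℕ) := (Fin.sum_univ_eq_sum_range G p).symm
    _ = _ := Finset.sum_congr rfl (fun j _ => (key j).symm)

lemma exists_rep_uniform {ι : Type*} [Fintype ι] (F : ι → P ⊗[k] Q) :
    ∃ (p : ℕ) (f : ι → Fin p → P) (g : ι → Fin p → Q),
      ∀ i, F i = ∑ j, f i j ⊗ₜ[k] g i j := by
  have h := fun i => exists_rep (k := k) (P := P) (Q := Q) (F i)
  choose q f g hf using h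
  classical
  set p := Finset.univ.sup q with hp
  have hle : ∀ i, q i ≤ p := fun i => Finset.le_sup (Finset.mem_univ i)
  have h2 := fun i => exists_rep_pad (k := k) (P := P) (Q := Q) (f i) (g i) (hle i)
  choose f' g' hf' using h2
  exact ⟨p, f', g', fun i => (hf i).trans (hf' i)⟩

end Reps

/-- A monoidal Hom-Hopf algebra (with bijective antipode) over a field `k`. -/
structure HomHopf (k : Type*) [Field k] (H : Type*) [AddCommGroup H] [Module k H] where
  mul : H →ₗ[k] H →ₗ[k] H
  one : H
  a : H ≃ₗ[k] H
  comul : H →ₗ[k] H ⊗[k] H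
  counit : H →ₗ[k] k
  S : H ≃ₗ[k] H
  hom_assoc : ∀ x y z : H, mul (a x) (mul y z) = mul (mul x y) (a z)
  a_mul : ∀ x y : H, a (mul x y) = mul (a x) (a y)
  mul_one' : ∀ x : H, mul x one = a x
  one_mul' : ∀ x : H, mul one x = a x
  a_one : a one = one
  hom_coassoc : (TensorProduct.map a.symm.toLinearMap comul).comp comul
      = (TensorProduct.assoc k H H H).toLinearMap.comp
          ((TensorProduct.map comul a.symm.toLinearMap).comp comul)
  comul_a : ∀ x : H, comul (a x) = TensorProduct.map a.toLinearMap a.toLinearMap (comul x)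
  counit_comul : ∀ x : H,
    (TensorProduct.lid k H) ((TensorProduct.map counit LinearMap.id) (comul x)) = a.symm x
  comul_counit : ∀ x : H,
    (TensorProduct.rid k H) ((TensorProduct.map LinearMap.id counit) (comul x)) = a.symm x
  counit_a : ∀ x : H, counit (a x) = counit x
  comul_mul : ∀ x y : H, comul (mul x y)
      = (TensorProduct.map (TensorProduct.lift mul) (TensorProduct.lift mul))
          ((TensorProduct.tensorTensorTensorComm k H H H H) (comul x ⊗ₜ[k] comul y))
  comul_one : comul one = one ⊗ₜ[k] one
  counit_mul : ∀ x y : H, counit (mul x y) = counit x * counit y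
  counit_one : counit one = 1
  S_a : ∀ x : H, S (a x) = a (S x)
  antipode_left : ∀ x : H,
    (TensorProduct.lift mul) ((TensorProduct.map S.toLinearMap LinearMap.id) (comul x))
      = counit x • one
  antipode_right : ∀ x : H,
    (TensorProduct.lift mul) ((TensorProduct.map LinearMap.id S.toLinearMap) (comul x))
      = counit x • one

/-- A monoidal Hom-Hopf algebra automorphism. -/
structure IsHomHopfAuto {k : Type*} [Field k] {H : Type*} [AddCommGroup H] [Module k H]
    (HH : HomHopf k H) (f : H ≃ₗ[k] H) : Prop where
  map_mul : ∀ x y : H, f (HH.mul x y) = HH.mul (f x) (f y)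
  map_one : f HH.one = HH.one
  map_comul : ∀ x : H, HH.comul (f x)
      = TensorProduct.map f.toLinearMap f.toLinearMap (HH.comul x)
  map_counit : ∀ x : H, HH.counit (f x) = HH.counit x
  map_a : ∀ x : H, f (HH.a x) = HH.a (f x)

/-- A left-right (A,B)-Yetter-Drinfeld Hom-module over `HH`. -/
structure YDModule {k : Type*} [Field k] {H : Type*} [AddCommGroup H] [Module k H]
    (HH : HomHopf k H) (A B : H ≃ₗ[k] H)
    (M : Type*) [AddCommGroup M] [Module k M] where
  act : H →ₗ[k] M →ₗ[k] M
  coact : M →ₗ[k] M ⊗[k] H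
  mu : M ≃ₗ[k] M
  hom_act : ∀ (h g : H) (m : M), act (HH.a h) (act g m) = act (HH.mul h g) (mu m)
  mu_act : ∀ (h : H) (m : M), mu (act h m) = act (HH.a h) (mu m)
  one_act : ∀ m : M, act HH.one m = mu m
  hom_coact : (TensorProduct.map mu.symm.toLinearMap HH.comul).comp coact
      = (TensorProduct.assoc k M H H).toLinearMap.comp
          ((TensorProduct.map coact HH.a.symm.toLinearMap).comp coact)
  coact_mu : ∀ m : M, coact (mu m)
      = TensorProduct.map mu.toLinearMap HH.a.toLinearMap (coact m)
  coact_counit : ∀ m : M,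
    (TensorProduct.rid k M) ((TensorProduct.map LinearMap.id HH.counit) (coact m)) = mu.symm m
  compat : ∀ (h : H) (m : M) (n : ℕ) (h1 h2 : Fin n → H),
      HH.comul h = ∑ i, h1 i ⊗ₜ[k] h2 i →
      ∀ (p : ℕ) (h21 h22 : Fin n → Fin p → H),
      (∀ i, HH.comul (h2 i) = ∑ j, h21 i j ⊗ₜ[k] h22 i j) →
      ∀ (q : ℕ) (m0 : Fin q → M) (m1 : Fin q → H),
      coact m = ∑ l, m0 l ⊗ₜ[k] m1 l →
      coact (act h m) = ∑ i, ∑ j, ∑ l,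
        act (HH.a (h21 i j)) (m0 l) ⊗ₜ[k]
          HH.mul (HH.mul (B (h22 i j)) (HH.a.symm (m1 l))) (A (HH.S.symm (h1 i)))

set_option maxRecDepth 4000

section HopfBasic

variable {k : Type*} [Field k] {H : Type*} [AddCommGroup H] [Module k H] (HH : HomHopf k H)

lemma a_symm_mul (x y : H) :
    HH.a.symm (HH.mul x y) = HH.mul (HH.a.symm x) (HH.a.symm y) := by
  apply HH.a.injective
  rw [LinearEquiv.apply_symm_apply, HH.a_mul, LinearEquiv.apply_symm_apply,
    LinearEquiv.apply_symm_apply]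

lemma a_symm_one : HH.a.symm HH.one = HH.one := by
  apply HH.a.injective; rw [LinearEquiv.apply_symm_apply, HH.a_one]

lemma counit_a_symm (x : H) : HH.counit (HH.a.symm x) = HH.counit x := by
  conv_rhs => rw [← LinearEquiv.apply_symm_apply HH.a x, HH.counit_a]

lemma comul_a_symm (x : H) : HH.comul (HH.a.symm x)
    = TensorProduct.map HH.a.symm.toLinearMap HH.a.symm.toLinearMap (HH.comul x) := by
  have h := HH.comul_a (HH.a.symm x)
  rw [LinearEquiv.apply_symm_apply] at h
  rw [h]
  generalize HH.comul (HH.a.symm x) = z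
  induction z using TensorProduct.induction_on with
  | zero => simp
  | tmul p q =>
    simp only [TensorProduct.map_tmul, LinearEquiv.coe_coe, LinearEquiv.symm_apply_apply]
  | add u v hu hv => simp only [map_add]; rw [← hu, ← hv]

lemma S_a_symm (x : H) : HH.S (HH.a.symm x) = HH.a.symm (HH.S x) := by
  apply HH.a.injective
  rw [← HH.S_a, LinearEquiv.apply_symm_apply, LinearEquiv.apply_symm_apply]

lemma Ssymm_a (x : H) : HH.S.symm (HH.a x) = HH.a (HH.S.symm x) := by
  apply HH.S.injective
  rw [LinearEquiv.apply_symm_apply, HH.S_a, LinearEquiv.apply_symm_apply]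

lemma Ssymm_a_symm (x : H) : HH.S.symm (HH.a.symm x) = HH.a.symm (HH.S.symm x) := by
  apply HH.S.injective
  rw [LinearEquiv.apply_symm_apply, S_a_symm, LinearEquiv.apply_symm_apply]

lemma counit_rep_left {n : ℕ} {y : H} {y1 y2 : Fin n → H}
    (h : HH.comul y = ∑ i, y1 i ⊗ₜ[k] y2 i) :
    ∑ i, HH.counit (y1 i) • y2 i = HH.a.symm y := by
  have hc := HH.counit_comul y
  rw [h] at hc
  simpa [map_sum] using hc

lemma counit_rep_right {n : ℕ} {y : H} {y1 y2 : Fin n → H}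
    (h : HH.comul y = ∑ i, y1 i ⊗ₜ[k] y2 i) :
    ∑ i, HH.counit (y2 i) • y1 i = HH.a.symm y := by
  have hc := HH.comul_counit y
  rw [h] at hc
  simpa [map_sum] using hc

lemma antipode_left_rep {n : ℕ} {y : H} {y1 y2 : Fin n → H}
    (h : HH.comul y = ∑ i, y1 i ⊗ₜ[k] y2 i) :
    ∑ i, HH.mul (HH.S (y1 i)) (y2 i) = HH.counit y • HH.one := by
  have hc := HH.antipode_left y
  rw [h] at hc
  simpa [map_sum] using hc

lemma antipode_right_rep {n : ℕ} {y : H} {y1 y2 : Fin n → H}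
    (h : HH.comul y = ∑ i, y1 i ⊗ₜ[k] y2 i) :
    ∑ i, HH.mul (y1 i) (HH.S (y2 i)) = HH.counit y • HH.one := by
  have hc := HH.antipode_right y
  rw [h] at hc
  simpa [map_sum] using hc

lemma comul_a_rep {n : ℕ} {y : H} {y1 y2 : Fin n → H}
    (h : HH.comul y = ∑ i, y1 i ⊗ₜ[k] y2 i) :
    HH.comul (HH.a y) = ∑ i, HH.a (y1 i) ⊗ₜ[k] HH.a (y2 i) := by
  rw [HH.comul_a, h]; simp [map_sum]

lemma comul_a_symm_rep {n : ℕ} {y : H} {y1 y2 : Fin n → H}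
    (h : HH.comul y = ∑ i, y1 i ⊗ₜ[k] y2 i) :
    HH.comul (HH.a.symm y) = ∑ i, HH.a.symm (y1 i) ⊗ₜ[k] HH.a.symm (y2 i) := by
  rw [comul_a_symm, h]; simp [map_sum]

lemma comul_mul_rep {nx ny : ℕ} {x y : H} {x1 x2 : Fin nx → H} {y1 y2 : Fin ny → H}
    (hx : HH.comul x = ∑ i, x1 i ⊗ₜ[k] x2 i) (hy : HH.comul y = ∑ t, y1 t ⊗ₜ[k] y2 t) :
    HH.comul (HH.mul x y)
      = ∑ i, ∑ t, HH.mul (x1 i) (y1 t) ⊗ₜ[k] HH.mul (x2 i) (y2 t) := by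
  rw [HH.comul_mul, hx, hy]
  simp [TensorProduct.sum_tmul, TensorProduct.tmul_sum, map_sum]
  exact Finset.sum_comm

lemma coassoc_rep {n p p' : ℕ} {y : H} {y1 y2 : Fin n → H}
    {y11 y12 : Fin n → Fin p → H} {y21 y22 : Fin n → Fin p' → H}
    (h : HH.comul y = ∑ i, y1 i ⊗ₜ[k] y2 i)
    (h1 : ∀ i, HH.comul (y1 i) = ∑ j, y11 i j ⊗ₜ[k] y12 i j)
    (h2 : ∀ i, HH.comul (y2 i) = ∑ j, y21 i j ⊗ₜ[k] y22 i j) :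
    ∑ i, ∑ j, HH.a.symm (y1 i) ⊗ₜ[k] (y21 i j ⊗ₜ[k] y22 i j)
      = ∑ i, ∑ j, y11 i j ⊗ₜ[k] (y12 i j ⊗ₜ[k] HH.a.symm (y2 i)) := by
  have hc := congrArg (fun f : H →ₗ[k] H ⊗[k] (H ⊗[k] H) => f y) HH.hom_coassoc
  simp only [LinearMap.comp_apply, LinearEquiv.coe_coe] at hc
  rw [h] at hc
  simpa [map_sum, h1, h2, TensorProduct.tmul_sum, TensorProduct.sum_tmul] using hc

lemma S_one : HH.S HH.one = HH.one := by
  have h := HH.antipode_left HH.one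
  rw [HH.comul_one] at h
  simp [HH.counit_one] at h
  rw [HH.mul_one'] at h
  apply HH.a.injective; rw [h, HH.a_one]

lemma Ssymm_one : HH.S.symm HH.one = HH.one := by
  apply HH.S.injective; rw [LinearEquiv.apply_symm_apply, S_one]

end HopfBasic

section AntiMult

variable {k : Type*} [Field k] {H : Type*} [AddCommGroup H] [Module k H] (HH : HomHopf k H)

noncomputable def Tmap : (H ⊗[k] (H ⊗[k] H)) ⊗[k] (H ⊗[k] (H ⊗[k] H)) →ₗ[k] H :=
  TensorProduct.lift HH.mul ∘ₗ
    TensorProduct.map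
      (HH.a.toLinearMap ∘ₗ HH.S.toLinearMap ∘ₗ TensorProduct.lift HH.mul)
      (TensorProduct.lift HH.mul ∘ₗ
        TensorProduct.map (TensorProduct.lift HH.mul)
          (TensorProduct.lift HH.mul ∘ₗ (TensorProduct.comm k H H).toLinearMap ∘ₗ
            TensorProduct.map HH.S.toLinearMap HH.S.toLinearMap) ∘ₗ
        (TensorProduct.tensorTensorTensorComm k H H H H).toLinearMap) ∘ₗ
    (TensorProduct.tensorTensorTensorComm k H (H ⊗[k] H) H (H ⊗[k] H)).toLinearMap

@[simp] lemma Tmap_tmul (u v w u' v' w' : H) :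
    Tmap HH ((u ⊗ₜ[k] (v ⊗ₜ[k] w)) ⊗ₜ[k] (u' ⊗ₜ[k] (v' ⊗ₜ[k] w')))
      = HH.mul (HH.a (HH.S (HH.mul u u')))
          (HH.mul (HH.mul v v') (HH.mul (HH.S w') (HH.S w))) := by
  simp [Tmap]

lemma antipode_left_rep2 {nu nv : ℕ} {u v : H}
    {u1 u2 : Fin nu → H} {v1 v2 : Fin nv → H}
    (hu : HH.comul u = ∑ j, u1 j ⊗ₜ[k] u2 j) (hv : HH.comul v = ∑ s, v1 s ⊗ₜ[k] v2 s) :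
    ∑ j, ∑ s, HH.mul (HH.S (HH.mul (u1 j) (v1 s))) (HH.mul (u2 j) (v2 s))
      = HH.counit u • HH.counit v • HH.one := by
  have hc := HH.antipode_left (HH.mul u v)
  rw [comul_mul_rep HH hu hv] at hc
  rw [HH.counit_mul, mul_smul] at hc
  simpa [map_sum] using hc

lemma stepA {nu nv : ℕ} {u v : H} {u1 u2 : Fin nu → H} {v1 v2 : Fin nv → H}
    (hu : HH.comul u = ∑ j, u1 j ⊗ₜ[k] u2 j) (hv : HH.comul v = ∑ s, v1 s ⊗ₜ[k] v2 s) :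
    ∑ j, ∑ s, HH.mul (HH.mul (u1 j) (v1 s)) (HH.mul (HH.S (v2 s)) (HH.S (u2 j)))
      = HH.counit u • HH.counit v • HH.one := by
  have hKv : ∑ s, HH.mul (HH.a.symm (v1 s)) (HH.S (HH.a.symm (v2 s)))
      = HH.counit v • HH.one := by
    have h := antipode_right_rep HH (comul_a_symm_rep HH hv)
    rwa [counit_a_symm] at h
  have hKu : ∑ j, HH.mul (HH.a (u1 j)) (HH.S (HH.a (u2 j))) = HH.counit u • HH.one := by
    have h := antipode_right_rep HH (comul_a_rep HH hu)
    rwa [HH.counit_a] at h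
  calc ∑ j, ∑ s, HH.mul (HH.mul (u1 j) (v1 s)) (HH.mul (HH.S (v2 s)) (HH.S (u2 j)))
      = ∑ j, ∑ s, HH.mul (HH.mul (u1 j) (HH.mul (HH.a.symm (v1 s))
          (HH.S (HH.a.symm (v2 s))))) (HH.a (HH.S (u2 j))) := by
        refine Finset.sum_congr rfl fun j _ => Finset.sum_congr rfl fun s _ => ?_
        have e1 := HH.hom_assoc (HH.a.symm (HH.mul (u1 j) (v1 s))) (HH.S (v2 s)) (HH.S (u2 j))
        rw [LinearEquiv.apply_symm_apply] at e1
        rw [e1, a_symm_mul]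
        have e2 := HH.hom_assoc (HH.a.symm (u1 j)) (HH.a.symm (v1 s)) (HH.S (HH.a.symm (v2 s)))
        rw [LinearEquiv.apply_symm_apply] at e2
        rw [show HH.a (HH.S (HH.a.symm (v2 s))) = HH.S (v2 s) from by
          rw [S_a_symm, LinearEquiv.apply_symm_apply]] at e2
        rw [← e2]
    _ = ∑ j, HH.mul (HH.mul (u1 j) (HH.counit v • HH.one)) (HH.a (HH.S (u2 j))) := by
        refine Finset.sum_congr rfl fun j _ => ?_
        rw [← hKv]
        simp [map_sum, LinearMap.sum_apply]
    _ = HH.counit v • ∑ j, HH.mul (HH.a (u1 j)) (HH.S (HH.a (u2 j))) := by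
        rw [Finset.smul_sum]
        refine Finset.sum_congr rfl fun j _ => ?_
        rw [map_smul, HH.mul_one']
        simp [map_smul, LinearMap.smul_apply, HH.S_a]
    _ = HH.counit u • HH.counit v • HH.one := by
        rw [hKu, smul_comm]

end AntiMult

section SAnti

variable {k : Type*} [Field k] {H : Type*} [AddCommGroup H] [Module k H] (HH : HomHopf k H)

lemma sum4_reorder {M : Type*} [AddCommMonoid M] {a b c d : ℕ}
    (F : Fin a → Fin b → Fin c → Fin d → M) :
    ∑ t, ∑ s, ∑ i, ∑ j, F t s i j = ∑ i, ∑ t, ∑ j, ∑ s, F t s i j := by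
  rw [show (∑ t, ∑ s, ∑ i, ∑ j, F t s i j) = ∑ t, ∑ i, ∑ s, ∑ j, F t s i j from
    Finset.sum_congr rfl fun t _ => Finset.sum_comm, Finset.sum_comm]
  exact Finset.sum_congr rfl fun i _ => Finset.sum_congr rfl fun t _ => Finset.sum_comm

lemma S_anti (x y : H) : HH.S (HH.mul x y) = HH.mul (HH.S y) (HH.S x) := by
  obtain ⟨nx, x1, x2, hx⟩ := exists_rep (k := k) (HH.comul x)
  obtain ⟨px, x11, x12, hx1⟩ := exists_rep_uniform (k := k) (fun i => HH.comul (x1 i))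
  obtain ⟨px2, x21, x22, hx2⟩ := exists_rep_uniform (k := k) (fun i => HH.comul (x2 i))
  obtain ⟨ny, y1, y2, hy⟩ := exists_rep (k := k) (HH.comul y)
  obtain ⟨py, y11, y12, hy1⟩ := exists_rep_uniform (k := k) (fun t => HH.comul (y1 t))
  obtain ⟨py2, y21, y22, hy2⟩ := exists_rep_uniform (k := k) (fun t => HH.comul (y2 t))
  have hswx := coassoc_rep HH hx hx1 hx2
  have hswy := coassoc_rep HH hy hy1 hy2
  have hS2 : ∀ u v : H, HH.a (HH.S (HH.mul (HH.a.symm u) (HH.a.symm v))) = HH.S (HH.mul u v) := by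
    intro u v; rw [← a_symm_mul, S_a_symm, LinearEquiv.apply_symm_apply]
  have hS3 : ∀ z : H, HH.a (HH.S (HH.a.symm z)) = HH.S z := by
    intro z; rw [S_a_symm, LinearEquiv.apply_symm_apply]
  have expand1 : Tmap HH ((∑ i, ∑ j, HH.a.symm (x1 i) ⊗ₜ[k] (x21 i j ⊗ₜ[k] x22 i j)) ⊗ₜ[k]
        (∑ t, ∑ s, HH.a.symm (y1 t) ⊗ₜ[k] (y21 t s ⊗ₜ[k] y22 t s)))
      = ∑ t, ∑ s, ∑ i, ∑ j, HH.mul (HH.S (HH.mul (x1 i) (y1 t)))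
          (HH.mul (HH.mul (x21 i j) (y21 t s)) (HH.mul (HH.S (y22 t s)) (HH.S (x22 i j)))) := by
    simp [TensorProduct.sum_tmul, TensorProduct.tmul_sum, hS2]
  have step12 : HH.S (HH.mul x y)
      = Tmap HH ((∑ i, ∑ j, HH.a.symm (x1 i) ⊗ₜ[k] (x21 i j ⊗ₜ[k] x22 i j)) ⊗ₜ[k]
          (∑ t, ∑ s, HH.a.symm (y1 t) ⊗ₜ[k] (y21 t s ⊗ₜ[k] y22 t s))) := by
    rw [expand1]
    have regroup1 : ∑ t, ∑ s, ∑ i, ∑ j, HH.mul (HH.S (HH.mul (x1 i) (y1 t)))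
          (HH.mul (HH.mul (x21 i j) (y21 t s)) (HH.mul (HH.S (y22 t s)) (HH.S (x22 i j))))
        = ∑ i, ∑ t, HH.mul (HH.S (HH.mul (x1 i) (y1 t)))
            (∑ j, ∑ s, HH.mul (HH.mul (x21 i j) (y21 t s))
              (HH.mul (HH.S (y22 t s)) (HH.S (x22 i j)))) := by
      rw [sum4_reorder]
      refine Finset.sum_congr rfl fun i _ => Finset.sum_congr rfl fun t _ => ?_
      simp [map_sum]
    rw [regroup1]
    have hstepA : ∀ i t, (∑ j, ∑ s, HH.mul (HH.mul (x21 i j) (y21 t s))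
          (HH.mul (HH.S (y22 t s)) (HH.S (x22 i j))))
        = HH.counit (x2 i) • HH.counit (y2 t) • HH.one := fun i t => stepA HH (hx2 i) (hy2 t)
    have final : ∑ i, ∑ t, HH.mul (HH.S (HH.mul (x1 i) (y1 t)))
          (HH.counit (x2 i) • HH.counit (y2 t) • HH.one)
        = HH.S (HH.mul x y) := by
      have e : ∀ i t, HH.mul (HH.S (HH.mul (x1 i) (y1 t)))
            (HH.counit (x2 i) • HH.counit (y2 t) • HH.one)
          = HH.counit (x2 i) • HH.counit (y2 t) • HH.a (HH.S (HH.mul (x1 i) (y1 t))) := by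
        intro i t
        rw [map_smul, map_smul, HH.mul_one']
      simp only [e]
      have hx' := counit_rep_right HH hx
      have hy' := counit_rep_right HH hy
      conv_rhs => rw [← hS2 x y, ← hx', ← hy']
      simp only [map_sum, LinearMap.sum_apply, map_smul, LinearMap.smul_apply,
        Finset.smul_sum]
      rw [Finset.sum_comm]
      exact Finset.sum_congr rfl fun t _ => Finset.sum_congr rfl fun i _ => smul_comm _ _ _
    rw [Finset.sum_congr rfl fun i _ => Finset.sum_congr rfl fun t _ =>
      congrArg _ (hstepA i t), final]
  rw [step12, hswx, hswy]
  have expand2 : Tmap HH ((∑ i, ∑ j, x11 i j ⊗ₜ[k] (x12 i j ⊗ₜ[k] HH.a.symm (x2 i))) ⊗ₜ[k]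
        (∑ t, ∑ s, y11 t s ⊗ₜ[k] (y12 t s ⊗ₜ[k] HH.a.symm (y2 t))))
      = ∑ t, ∑ s, ∑ i, ∑ j, HH.mul (HH.mul (HH.S (HH.mul (x11 i j) (y11 t s)))
          (HH.mul (x12 i j) (y12 t s))) (HH.mul (HH.S (y2 t)) (HH.S (x2 i))) := by
    simp only [TensorProduct.sum_tmul, TensorProduct.tmul_sum, map_sum, Tmap_tmul]
    refine Finset.sum_congr rfl fun t _ => Finset.sum_congr rfl fun s _ =>
      Finset.sum_congr rfl fun i _ => Finset.sum_congr rfl fun j _ => ?_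
    have e1 := HH.hom_assoc (HH.S (HH.mul (x11 i j) (y11 t s))) (HH.mul (x12 i j) (y12 t s))
      (HH.mul (HH.S (HH.a.symm (y2 t))) (HH.S (HH.a.symm (x2 i))))
    rw [e1, HH.a_mul, hS3, hS3]
  rw [expand2]
  have regroup2 : ∑ t, ∑ s, ∑ i, ∑ j, HH.mul (HH.mul (HH.S (HH.mul (x11 i j) (y11 t s)))
        (HH.mul (x12 i j) (y12 t s))) (HH.mul (HH.S (y2 t)) (HH.S (x2 i)))
      = ∑ i, ∑ t, HH.mul (∑ j, ∑ s, HH.mul (HH.S (HH.mul (x11 i j) (y11 t s)))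
          (HH.mul (x12 i j) (y12 t s))) (HH.mul (HH.S (y2 t)) (HH.S (x2 i))) := by
    rw [sum4_reorder]
    refine Finset.sum_congr rfl fun i _ => Finset.sum_congr rfl fun t _ => ?_
    simp [map_sum, LinearMap.sum_apply]
  rw [regroup2]
  have hFN : ∀ i t, (∑ j, ∑ s, HH.mul (HH.S (HH.mul (x11 i j) (y11 t s)))
        (HH.mul (x12 i j) (y12 t s)))
      = HH.counit (x1 i) • HH.counit (y1 t) • HH.one :=
    fun i t => antipode_left_rep2 HH (hx1 i) (hy1 t)
  have e : ∀ i t, HH.mul (HH.counit (x1 i) • HH.counit (y1 t) • HH.one)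
        (HH.mul (HH.S (y2 t)) (HH.S (x2 i)))
      = HH.counit (x1 i) • HH.counit (y1 t) •
          HH.a (HH.mul (HH.S (y2 t)) (HH.S (x2 i))) := by
    intro i t
    rw [map_smul, LinearMap.smul_apply, map_smul, LinearMap.smul_apply, HH.one_mul']
  rw [Finset.sum_congr rfl fun i _ => Finset.sum_congr rfl fun t _ => by rw [hFN i t, e i t]]
  have hgoal : HH.mul (HH.S y) (HH.S x)
      = HH.a (HH.mul (HH.S (HH.a.symm y)) (HH.S (HH.a.symm x))) := by
    rw [S_a_symm, S_a_symm, ← a_symm_mul, LinearEquiv.apply_symm_apply]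
  rw [hgoal, ← counit_rep_left HH hx, ← counit_rep_left HH hy]
  simp only [map_sum, LinearMap.sum_apply, map_smul, LinearMap.smul_apply, Finset.smul_sum]

end SAnti

section SInv

variable {k : Type*} [Field k] {H : Type*} [AddCommGroup H] [Module k H] (HH : HomHopf k H)

lemma Ssymm_mul (u v : H) :
    HH.S.symm (HH.mul u v) = HH.mul (HH.S.symm v) (HH.S.symm u) := by
  apply HH.S.injective
  rw [LinearEquiv.apply_symm_apply, S_anti, LinearEquiv.apply_symm_apply,
    LinearEquiv.apply_symm_apply]

lemma Sinv_antipode_rep {n : ℕ} {y : H} {y1 y2 : Fin n → H}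
    (h : HH.comul y = ∑ i, y1 i ⊗ₜ[k] y2 i) :
    ∑ i, HH.mul (HH.S.symm (y2 i)) (y1 i) = HH.counit y • HH.one := by
  have e : ∀ i, HH.mul (HH.S.symm (y2 i)) (y1 i)
      = HH.S.symm (HH.mul (HH.S (y1 i)) (y2 i)) := by
    intro i; rw [Ssymm_mul, LinearEquiv.symm_apply_apply]
  simp only [e]
  rw [← map_sum, antipode_left_rep HH h, map_smul, Ssymm_one]

variable {HH} {f : H ≃ₗ[k] H}

lemma auto_symm_mul (hf : IsHomHopfAuto HH f) (x y : H) :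
    f.symm (HH.mul x y) = HH.mul (f.symm x) (f.symm y) := by
  apply f.injective
  rw [LinearEquiv.apply_symm_apply, hf.map_mul, LinearEquiv.apply_symm_apply,
    LinearEquiv.apply_symm_apply]

lemma auto_symm_one (hf : IsHomHopfAuto HH f) : f.symm HH.one = HH.one := by
  apply f.injective; rw [LinearEquiv.apply_symm_apply, hf.map_one]

lemma auto_symm_counit (hf : IsHomHopfAuto HH f) (x : H) : HH.counit (f.symm x) = HH.counit x := by
  conv_rhs => rw [← LinearEquiv.apply_symm_apply f x, hf.map_counit]

lemma auto_symm_a (hf : IsHomHopfAuto HH f) (x : H) : f.symm (HH.a x) = HH.a (f.symm x) := by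
  apply f.injective
  rw [LinearEquiv.apply_symm_apply, hf.map_a, LinearEquiv.apply_symm_apply]

lemma auto_symm_comul (hf : IsHomHopfAuto HH f) (x : H) : HH.comul (f.symm x)
    = TensorProduct.map f.symm.toLinearMap f.symm.toLinearMap (HH.comul x) := by
  have h := hf.map_comul (f.symm x)
  rw [LinearEquiv.apply_symm_apply] at h
  rw [h]
  generalize HH.comul (f.symm x) = z
  induction z using TensorProduct.induction_on with
  | zero => simp
  | tmul p q =>
    simp only [TensorProduct.map_tmul, LinearEquiv.coe_coe, LinearEquiv.symm_apply_apply]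
  | add u v hu hv => simp only [map_add]; rw [← hu, ← hv]

lemma auto_symm_comul_rep (hf : IsHomHopfAuto HH f) {n : ℕ} {y : H} {y1 y2 : Fin n → H}
    (h : HH.comul y = ∑ i, y1 i ⊗ₜ[k] y2 i) :
    HH.comul (f.symm y) = ∑ i, f.symm (y1 i) ⊗ₜ[k] f.symm (y2 i) := by
  rw [auto_symm_comul hf, h]; simp [map_sum]

end SInv

section Maps

variable {k : Type*} [Field k] {H : Type*} [AddCommGroup H] [Module k H]
  {M : Type*} [AddCommGroup M] [Module k M] {N : Type*} [AddCommGroup N] [Module k N]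

noncomputable def PhiU (HH : HomHopf k H) (A B : H ≃ₗ[k] H) :
    (N ⊗[k] H) ⊗[k] (M ⊗[k] H) →ₗ[k] (N ⊗[k] M) ⊗[k] H :=
  (TensorProduct.map LinearMap.id
      (TensorProduct.lift HH.mul ∘ₗ (TensorProduct.comm k H H).toLinearMap ∘ₗ
        TensorProduct.map (A.toLinearMap ∘ₗ B.symm.toLinearMap) LinearMap.id)) ∘ₗ
  (TensorProduct.tensorTensorTensorComm k N H M H).toLinearMap

@[simp] lemma PhiU_tmul (HH : HomHopf k H) (A B : H ≃ₗ[k] H)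
    (n : N) (h : H) (m : M) (g : H) :
    PhiU HH A B ((n ⊗ₜ[k] h) ⊗ₜ[k] (m ⊗ₜ[k] g))
      = (n ⊗ₜ[k] m) ⊗ₜ[k] HH.mul g (A (B.symm h)) := by
  simp [PhiU]

noncomputable def PhiMN (HH : HomHopf k H) :
    (M ⊗[k] H) ⊗[k] (N ⊗[k] H) →ₗ[k] (M ⊗[k] N) ⊗[k] H :=
  (TensorProduct.map LinearMap.id
      (TensorProduct.lift HH.mul ∘ₗ (TensorProduct.comm k H H).toLinearMap)) ∘ₗ
  (TensorProduct.tensorTensorTensorComm k M H N H).toLinearMap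

@[simp] lemma PhiMN_tmul (HH : HomHopf k H) (m : M) (g : H) (n : N) (h : H) :
    PhiMN HH ((m ⊗ₜ[k] g) ⊗ₜ[k] (n ⊗ₜ[k] h))
      = (m ⊗ₜ[k] n) ⊗ₜ[k] HH.mul h g := by
  simp [PhiMN]

noncomputable def CMap (B : H ≃ₗ[k] H) (nu : N ≃ₗ[k] N)
    (act : H →ₗ[k] M →ₗ[k] M) (mu : M ≃ₗ[k] M) :
    (N ⊗[k] H) ⊗[k] M →ₗ[k] N ⊗[k] M :=
  (TensorProduct.map nu.toLinearMap
      (TensorProduct.lift act ∘ₗ TensorProduct.map B.symm.toLinearMap mu.symm.toLinearMap)) ∘ₗ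
  (TensorProduct.assoc k N H M).toLinearMap

@[simp] lemma CMap_tmul (B : H ≃ₗ[k] H) (nu : N ≃ₗ[k] N)
    (act : H →ₗ[k] M →ₗ[k] M) (mu : M ≃ₗ[k] M) (n : N) (h : H) (m : M) :
    CMap B nu act mu ((n ⊗ₜ[k] h) ⊗ₜ[k] m)
      = nu n ⊗ₜ[k] act (B.symm h) (mu.symm m) := by
  simp [CMap]

noncomputable def ThetaU (HH : HomHopf k H) (A B : H ≃ₗ[k] H)
    (act : H →ₗ[k] M →ₗ[k] M) :
    (H ⊗[k] (H ⊗[k] H)) ⊗[k] (M ⊗[k] H) →ₗ[k] M ⊗[k] H :=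
  (TensorProduct.map LinearMap.id
      (TensorProduct.lift HH.mul ∘ₗ
        TensorProduct.map LinearMap.id (A.toLinearMap ∘ₗ HH.S.symm.toLinearMap))) ∘ₗ
  (TensorProduct.assoc k M H H).toLinearMap ∘ₗ
  (TensorProduct.comm k H (M ⊗[k] H)).toLinearMap ∘ₗ
  (TensorProduct.map LinearMap.id
      (TensorProduct.map
        (TensorProduct.lift act ∘ₗ TensorProduct.map HH.a.toLinearMap LinearMap.id)
        (TensorProduct.lift HH.mul ∘ₗ
          TensorProduct.map B.toLinearMap HH.a.symm.toLinearMap))) ∘ₗ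
  (TensorProduct.map LinearMap.id
      (TensorProduct.tensorTensorTensorComm k H H M H).toLinearMap) ∘ₗ
  (TensorProduct.assoc k H (H ⊗[k] H) (M ⊗[k] H)).toLinearMap

@[simp] lemma ThetaU_tmul (HH : HomHopf k H) (A B : H ≃ₗ[k] H)
    (act : H →ₗ[k] M →ₗ[k] M) (u v w : H) (m : M) (g : H) :
    ThetaU HH A B act ((u ⊗ₜ[k] (v ⊗ₜ[k] w)) ⊗ₜ[k] (m ⊗ₜ[k] g))
      = act (HH.a v) m ⊗ₜ[k]
          HH.mul (HH.mul (B w) (HH.a.symm g)) (A (HH.S.symm u)) := by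
  simp [ThetaU]

noncomputable def GU (HH : HomHopf k H) (B : H ≃ₗ[k] H) (nu : N ≃ₗ[k] N)
    (act : H →ₗ[k] M →ₗ[k] M) :
    (N ⊗[k] (H ⊗[k] H)) ⊗[k] (M ⊗[k] H) →ₗ[k] (N ⊗[k] M) ⊗[k] H :=
  (TensorProduct.assoc k N M H).symm.toLinearMap ∘ₗ
  (TensorProduct.map nu.toLinearMap
      (TensorProduct.map
        (TensorProduct.lift act ∘ₗ TensorProduct.map B.symm.toLinearMap LinearMap.id)
        (TensorProduct.lift HH.mul ∘ₗ
          TensorProduct.map HH.a.toLinearMap HH.a.toLinearMap))) ∘ₗ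
  (TensorProduct.map LinearMap.id
      (TensorProduct.tensorTensorTensorComm k H H M H).toLinearMap) ∘ₗ
  (TensorProduct.assoc k N (H ⊗[k] H) (M ⊗[k] H)).toLinearMap

@[simp] lemma GU_tmul (HH : HomHopf k H) (B : H ≃ₗ[k] H) (nu : N ≃ₗ[k] N)
    (act : H →ₗ[k] M →ₗ[k] M) (n : N) (g h : H) (m : M) (e : H) :
    GU HH B nu act ((n ⊗ₜ[k] (g ⊗ₜ[k] h)) ⊗ₜ[k] (m ⊗ₜ[k] e))
      = (nu n ⊗ₜ[k] act (B.symm g) m) ⊗ₜ[k] HH.mul (HH.a h) (HH.a e) := by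
  simp [GU]

noncomputable def Gw (HH : HomHopf k H) (B : H ≃ₗ[k] H) (nu : N ≃ₗ[k] N)
    (act : H →ₗ[k] M →ₗ[k] M) (w : M ⊗[k] H) :
    N ⊗[k] (H ⊗[k] H) →ₗ[k] (N ⊗[k] M) ⊗[k] H :=
  GU HH B nu act ∘ₗ (TensorProduct.mk k (N ⊗[k] (H ⊗[k] H)) (M ⊗[k] H)).flip w

lemma Gw_apply (HH : HomHopf k H) (B : H ≃ₗ[k] H) (nu : N ≃ₗ[k] N)
    (act : H →ₗ[k] M →ₗ[k] M) (w : M ⊗[k] H) (z : N ⊗[k] (H ⊗[k] H)) :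
    Gw HH B nu act w z = GU HH B nu act (z ⊗ₜ[k] w) := rfl

noncomputable def LL1 (HH : HomHopf k H) (A B : H ≃ₗ[k] H) (nu : N ≃ₗ[k] N)
    (act : H →ₗ[k] M →ₗ[k] M) (w : M ⊗[k] H) :
    N ⊗[k] (H ⊗[k] H) →ₗ[k] (N ⊗[k] M) ⊗[k] H :=
  PhiU HH A B ∘ₗ (TensorProduct.assoc k N H (M ⊗[k] H)).symm.toLinearMap ∘ₗ
  (TensorProduct.map nu.toLinearMap
    (TensorProduct.map HH.a.toLinearMap
      (ThetaU HH A B act ∘ₗ (TensorProduct.mk k (H ⊗[k] (H ⊗[k] H)) (M ⊗[k] H)).flip w ∘ₗ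
        (TensorProduct.map LinearMap.id HH.comul ∘ₗ HH.comul) ∘ₗ
        (HH.a.toLinearMap ∘ₗ B.symm.toLinearMap))))

lemma LL1_tmul (HH : HomHopf k H) (A B : H ≃ₗ[k] H) (nu : N ≃ₗ[k] N)
    (act : H →ₗ[k] M →ₗ[k] M) (w : M ⊗[k] H) (n : N) (g h : H) :
    LL1 HH A B nu act w (n ⊗ₜ[k] (g ⊗ₜ[k] h))
      = PhiU HH A B ((nu n ⊗ₜ[k] HH.a g) ⊗ₜ[k]
          ThetaU HH A B act
            ((TensorProduct.map LinearMap.id HH.comul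
                (HH.comul (HH.a (B.symm h)))) ⊗ₜ[k] w)) := by
  simp [LL1]

noncomputable def Hn (HH : HomHopf k H) (A B : H ≃ₗ[k] H) (nu : N ≃ₗ[k] N)
    (act : H →ₗ[k] M →ₗ[k] M) (w : M ⊗[k] H) (n : N) :
    H ⊗[k] (H ⊗[k] (H ⊗[k] H)) →ₗ[k] (N ⊗[k] M) ⊗[k] H :=
  PhiU HH A B ∘ₗ (TensorProduct.assoc k N H (M ⊗[k] H)).symm.toLinearMap ∘ₗ
  (TensorProduct.mk k N (H ⊗[k] (M ⊗[k] H))) (nu n) ∘ₗ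
  (TensorProduct.map HH.a.toLinearMap
    (ThetaU HH A B act ∘ₗ (TensorProduct.mk k (H ⊗[k] (H ⊗[k] H)) (M ⊗[k] H)).flip w ∘ₗ
      TensorProduct.map (HH.a.toLinearMap ∘ₗ B.symm.toLinearMap)
        (TensorProduct.map (HH.a.toLinearMap ∘ₗ B.symm.toLinearMap)
          (HH.a.toLinearMap ∘ₗ B.symm.toLinearMap))))

lemma Hn_tmul (HH : HomHopf k H) (A B : H ≃ₗ[k] H) (nu : N ≃ₗ[k] N)
    (act : H →ₗ[k] M →ₗ[k] M) (w : M ⊗[k] H) (n : N) (u v s t : H) :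
    Hn HH A B nu act w n (u ⊗ₜ[k] (v ⊗ₜ[k] (s ⊗ₜ[k] t)))
      = PhiU HH A B ((nu n ⊗ₜ[k] HH.a u) ⊗ₜ[k]
          ThetaU HH A B act
            ((HH.a (B.symm v) ⊗ₜ[k] (HH.a (B.symm s) ⊗ₜ[k] HH.a (B.symm t))) ⊗ₜ[k] w)) := by
  simp [Hn]

end Maps

section Key

variable {k : Type*} [Field k] {H : Type*} [AddCommGroup H] [Module k H]
  {M : Type*} [AddCommGroup M] [Module k M] {N : Type*} [AddCommGroup N] [Module k N]

lemma key_colinear (HH : HomHopf k H) (A B : H ≃ₗ[k] H)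
    (hA : IsHomHopfAuto HH A) (hB : IsHomHopfAuto HH B)
    (nu : N ≃ₗ[k] N) (act : H →ₗ[k] M →ₗ[k] M)
    (w : M ⊗[k] H) (n : N) (z : H) :
    LL1 HH A B nu act w (n ⊗ₜ[k] HH.comul z)
      = Gw HH B nu act w (n ⊗ₜ[k] HH.comul z) := by
  obtain ⟨nz, z1, z2, hz⟩ := exists_rep (k := k) (HH.comul z)
  obtain ⟨p1, z11, z12, hz1⟩ := exists_rep_uniform (k := k) (fun i => HH.comul (z1 i))
  obtain ⟨p2, z21, z22, hz2⟩ := exists_rep_uniform (k := k) (fun i => HH.comul (z2 i))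
  obtain ⟨p3, z221, z222, hz22p⟩ := exists_rep_uniform (k := k)
    (fun ij : Fin nz × Fin p2 => HH.comul (z22 ij.1 ij.2))
  obtain ⟨qw, w0, w1, hw⟩ := exists_rep (k := k) w
  have hz22 : ∀ i j, HH.comul (z22 i j) = ∑ jj, z221 (i, j) jj ⊗ₜ[k] z222 (i, j) jj :=
    fun i j => hz22p (i, j)
  have e1 : ∀ v : H, HH.a (B.symm (HH.a.symm v)) = B.symm v := by
    intro v
    conv_rhs => rw [← LinearEquiv.apply_symm_apply HH.a v, auto_symm_a hB]
  -- double comultiplication of a (B⁻¹ (z2 i))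
  have hcm : ∀ i, TensorProduct.map LinearMap.id HH.comul
        (HH.comul (HH.a (B.symm (z2 i))))
      = ∑ j, HH.a (B.symm (z21 i j)) ⊗ₜ[k]
          (∑ jj, HH.a (B.symm (z221 (i, j) jj)) ⊗ₜ[k] HH.a (B.symm (z222 (i, j) jj))) := by
    intro i
    rw [comul_a_rep HH (auto_symm_comul_rep hB (hz2 i)), map_sum]
    refine Finset.sum_congr rfl fun j _ => ?_
    rw [TensorProduct.map_tmul,
      comul_a_rep HH (auto_symm_comul_rep hB (hz22 i j))]
    simp
  -- claim 1 : LL1 value as Hn of the first associativity element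
  have claim1 : LL1 HH A B nu act w (n ⊗ₜ[k] HH.comul z)
      = Hn HH A B nu act w n (∑ i, ∑ j, ∑ jj, z1 i ⊗ₜ[k]
          (z21 i j ⊗ₜ[k] (z221 (i, j) jj ⊗ₜ[k] z222 (i, j) jj))) := by
    rw [hz]
    simp only [TensorProduct.tmul_sum, map_sum, LL1_tmul, Hn_tmul, hcm,
      TensorProduct.sum_tmul]
  -- the Hom-coassociativity rearrangement
  have hz2' : ∀ i, HH.comul (HH.a.symm (z2 i))
      = ∑ j2, HH.a.symm (z21 i j2) ⊗ₜ[k] HH.a.symm (z22 i j2) :=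
    fun i => comul_a_symm_rep HH (hz2 i)
  have dagger : (∑ i, ∑ j, ∑ jj, z1 i ⊗ₜ[k]
        (z21 i j ⊗ₜ[k] (z221 (i, j) jj ⊗ₜ[k] z222 (i, j) jj)))
      = ∑ i, ∑ j, ∑ j2, HH.a (z11 i j) ⊗ₜ[k]
          (z12 i j ⊗ₜ[k] (HH.a.symm (z21 i j2) ⊗ₜ[k] HH.a.symm (z22 i j2))) := by
    have h2 := congrArg (TensorProduct.map HH.a.toLinearMap
      (TensorProduct.map LinearMap.id HH.comul)) (coassoc_rep HH hz hz1 hz2)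
    simp only [map_sum, TensorProduct.map_tmul, LinearMap.id_coe, id_eq,
      LinearEquiv.coe_coe, LinearEquiv.apply_symm_apply, hz22, hz2',
      TensorProduct.tmul_sum] at h2
    exact h2
  -- expansion of Hn on the second element
  have expandR : Hn HH A B nu act w n (∑ i, ∑ j, ∑ j2, HH.a (z11 i j) ⊗ₜ[k]
        (z12 i j ⊗ₜ[k] (HH.a.symm (z21 i j2) ⊗ₜ[k] HH.a.symm (z22 i j2))))
      = ∑ i, ∑ j, ∑ j2, ∑ l,
          (nu n ⊗ₜ[k] act (HH.a (B.symm (z21 i j2))) (w0 l)) ⊗ₜ[k]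
            HH.mul (HH.mul (HH.mul (z22 i j2) (HH.a.symm (w1 l)))
                (HH.a (A (HH.S.symm (B.symm (z12 i j))))))
              (HH.a (HH.a (A (B.symm (z11 i j))))) := by
    rw [hw]
    simp only [map_sum, Hn_tmul, TensorProduct.sum_tmul, TensorProduct.tmul_sum,
      ThetaU_tmul, PhiU_tmul, e1, LinearEquiv.apply_symm_apply, Ssymm_a,
      hA.map_a, auto_symm_a hB]
  -- pointwise Hom-associativity and antipode collapse
  have stepc : ∀ i, (∑ j, ∑ j2, ∑ l,
        (nu n ⊗ₜ[k] act (HH.a (B.symm (z21 i j2))) (w0 l)) ⊗ₜ[k]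
          HH.mul (HH.mul (HH.mul (z22 i j2) (HH.a.symm (w1 l)))
              (HH.a (A (HH.S.symm (B.symm (z12 i j))))))
            (HH.a (HH.a (A (B.symm (z11 i j))))))
      = HH.counit (z1 i) • ∑ j2, ∑ l,
          (nu n ⊗ₜ[k] act (HH.a (B.symm (z21 i j2))) (w0 l)) ⊗ₜ[k]
            HH.mul (HH.a (HH.a (z22 i j2))) (HH.a (w1 l)) := by
    intro i
    have hanti : ∑ j, HH.mul (HH.S.symm (B.symm (z12 i j))) (B.symm (z11 i j))
        = HH.counit (z1 i) • HH.one := by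
      have h := Sinv_antipode_rep HH (auto_symm_comul_rep hB (hz1 i))
      rwa [auto_symm_counit hB] at h
    rw [Finset.sum_comm, Finset.smul_sum]
    refine Finset.sum_congr rfl fun j2 _ => ?_
    rw [Finset.sum_comm, Finset.smul_sum]
    refine Finset.sum_congr rfl fun l _ => ?_
    have stepa : ∀ j, HH.mul (HH.mul (HH.mul (z22 i j2) (HH.a.symm (w1 l)))
          (HH.a (A (HH.S.symm (B.symm (z12 i j))))))
        (HH.a (HH.a (A (B.symm (z11 i j)))))
        = HH.mul (HH.a (HH.mul (z22 i j2) (HH.a.symm (w1 l))))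
            (HH.a (A (HH.mul (HH.S.symm (B.symm (z12 i j))) (B.symm (z11 i j))))) := by
      intro j
      rw [← HH.hom_assoc (HH.mul (z22 i j2) (HH.a.symm (w1 l)))
        (HH.a (A (HH.S.symm (B.symm (z12 i j))))) (HH.a (A (B.symm (z11 i j))))]
      rw [← HH.a_mul, ← hA.map_mul]
    simp only [stepa]
    rw [show (∑ j, (nu n ⊗ₜ[k] act (HH.a (B.symm (z21 i j2))) (w0 l)) ⊗ₜ[k]
        HH.mul (HH.a (HH.mul (z22 i j2) (HH.a.symm (w1 l))))
          (HH.a (A (HH.mul (HH.S.symm (B.symm (z12 i j))) (B.symm (z11 i j))))))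
      = (nu n ⊗ₜ[k] act (HH.a (B.symm (z21 i j2))) (w0 l)) ⊗ₜ[k]
        HH.mul (HH.a (HH.mul (z22 i j2) (HH.a.symm (w1 l))))
          (HH.a (A (∑ j, HH.mul (HH.S.symm (B.symm (z12 i j))) (B.symm (z11 i j)))))
      from by simp only [map_sum, TensorProduct.tmul_sum]]
    rw [hanti, map_smul, map_smul, map_smul, hA.map_one, HH.a_one, HH.mul_one',
      TensorProduct.tmul_smul]
    congr 1
    rw [HH.a_mul, HH.a_mul]
    congr 1
    rw [← LinearEquiv.apply_symm_apply HH.a (w1 l)]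
    rw [LinearEquiv.symm_apply_apply]
  -- the J-map bookkeeping
  have claim5 : Gw HH B nu act w (n ⊗ₜ[k] HH.comul z)
      = ∑ i, ∑ l, (nu n ⊗ₜ[k] act (B.symm (z1 i)) (w0 l)) ⊗ₜ[k]
          HH.mul (HH.a (z2 i)) (HH.a (w1 l)) := by
    rw [hz, Gw_apply, hw]
    simp only [TensorProduct.tmul_sum, TensorProduct.sum_tmul, map_sum, GU_tmul]
    exact Finset.sum_comm
  set Jm : H ⊗[k] H →ₗ[k] (N ⊗[k] M) ⊗[k] H :=
    Gw HH B nu act w ∘ₗ (TensorProduct.mk k N (H ⊗[k] H)) n ∘ₗ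
      TensorProduct.map HH.a.toLinearMap HH.a.toLinearMap with hJm_def
  have hJm : ∀ s t : H, Jm (s ⊗ₜ[k] t)
      = ∑ l, (nu n ⊗ₜ[k] act (HH.a (B.symm s)) (w0 l)) ⊗ₜ[k]
          HH.mul (HH.a (HH.a t)) (HH.a (w1 l)) := by
    intro s t
    simp only [hJm_def, LinearMap.comp_apply, TensorProduct.map_tmul,
      LinearEquiv.coe_coe, TensorProduct.mk_apply, Gw_apply]
    rw [hw]
    simp only [TensorProduct.tmul_sum, map_sum, GU_tmul, auto_symm_a hB]
  have claim6 : ∑ i, HH.counit (z1 i) • ∑ j2, ∑ l,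
        (nu n ⊗ₜ[k] act (HH.a (B.symm (z21 i j2))) (w0 l)) ⊗ₜ[k]
          HH.mul (HH.a (HH.a (z22 i j2))) (HH.a (w1 l))
      = Gw HH B nu act w (n ⊗ₜ[k] HH.comul z) := by
    have hJi : ∀ i, Jm (HH.comul (z2 i)) = ∑ j2, ∑ l,
        (nu n ⊗ₜ[k] act (HH.a (B.symm (z21 i j2))) (w0 l)) ⊗ₜ[k]
          HH.mul (HH.a (HH.a (z22 i j2))) (HH.a (w1 l)) := by
      intro i
      rw [hz2 i, map_sum]
      exact Finset.sum_congr rfl fun j2 _ => hJm _ _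
    calc ∑ i, HH.counit (z1 i) • ∑ j2, ∑ l,
          (nu n ⊗ₜ[k] act (HH.a (B.symm (z21 i j2))) (w0 l)) ⊗ₜ[k]
            HH.mul (HH.a (HH.a (z22 i j2))) (HH.a (w1 l))
        = Jm (HH.comul (∑ i, HH.counit (z1 i) • z2 i)) := by
          simp only [map_sum, map_smul, hJi]
      _ = Jm (HH.comul (HH.a.symm z)) := by rw [counit_rep_left HH hz]
      _ = Gw HH B nu act w (n ⊗ₜ[k] HH.comul z) := by
          rw [comul_a_symm, hz]
          simp only [map_sum, TensorProduct.map_tmul, LinearEquiv.coe_coe,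
            hJm_def, LinearMap.comp_apply, TensorProduct.mk_apply,
            LinearEquiv.apply_symm_apply, TensorProduct.tmul_sum]
  rw [claim1, dagger, expandR]
  rw [Finset.sum_congr rfl fun i _ => stepc i]
  rw [claim6]

end Key

/-- The braiding c_{M,N}(m⊗n) = ν(n₍₀₎) ⊗ B⁻¹(n₍₁₎)·μ⁻¹(m) is H-colinear:
ρ_{ᴹN⊗M} ∘ c_{M,N} = (c_{M,N}⊗id) ∘ ρ_{M⊗N}, with codiagonal coactions and the
twisted coaction n ↦ n₍₀₎ ⊗ AB⁻¹(n₍₁₎) on ᴹN. -/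
theorem stmt_12 {k : Type*} [Field k] {H : Type*} [AddCommGroup H] [Module k H]
    {M : Type*} [AddCommGroup M] [Module k M] {N : Type*} [AddCommGroup N] [Module k N]
    (HH : HomHopf k H) (A B C D : H ≃ₗ[k] H)
    (hA : IsHomHopfAuto HH A) (hB : IsHomHopfAuto HH B)
    (hC : IsHomHopfAuto HH C) (hD : IsHomHopfAuto HH D)
    (YM : YDModule HH A B M) (YN : YDModule HH C D N)
    (c : (M ⊗[k] N) →ₗ[k] (N ⊗[k] M))
    (hc : ∀ (m : M) (x : N) (q : ℕ) (n0 : Fin q → N) (n1 : Fin q → H),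
      YN.coact x = ∑ l, n0 l ⊗ₜ[k] n1 l →
      c (m ⊗ₜ[k] x) = ∑ l, YN.mu (n0 l) ⊗ₜ[k] YM.act (B.symm (n1 l)) (YM.mu.symm m))
    (coactMN : (M ⊗[k] N) →ₗ[k] (M ⊗[k] N) ⊗[k] H)
    (hcoactMN : ∀ (m : M) (x : N) (q : ℕ) (m0 : Fin q → M) (m1 : Fin q → H),
      YM.coact m = ∑ l, m0 l ⊗ₜ[k] m1 l →
      ∀ (r : ℕ) (n0 : Fin r → N) (n1 : Fin r → H),
      YN.coact x = ∑ t, n0 t ⊗ₜ[k] n1 t →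
      coactMN (m ⊗ₜ[k] x) = ∑ l, ∑ t, (m0 l ⊗ₜ[k] n0 t) ⊗ₜ[k] HH.mul (n1 t) (m1 l))
    (coactNM : (N ⊗[k] M) →ₗ[k] (N ⊗[k] M) ⊗[k] H)
    (hcoactNM : ∀ (x : N) (m : M) (q : ℕ) (m0 : Fin q → M) (m1 : Fin q → H),
      YM.coact m = ∑ l, m0 l ⊗ₜ[k] m1 l →
      ∀ (r : ℕ) (n0 : Fin r → N) (n1 : Fin r → H),
      YN.coact x = ∑ t, n0 t ⊗ₜ[k] n1 t →
      coactNM (x ⊗ₜ[k] m)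
        = ∑ t, ∑ l, (n0 t ⊗ₜ[k] m0 l) ⊗ₜ[k] HH.mul (m1 l) (A (B.symm (n1 t)))) :
    ∀ z : M ⊗[k] N,
      coactNM (c z) = (TensorProduct.map c LinearMap.id) (coactMN z) := by
  have c_eq : ∀ (m : M) (x : N),
      c (m ⊗ₜ[k] x) = CMap B YN.mu YM.act YM.mu ((YN.coact x) ⊗ₜ[k] m) := by
    intro m x
    obtain ⟨q, n0, n1, hx⟩ := exists_rep (k := k) (YN.coact x)
    rw [hc m x q n0 n1 hx, hx]
    simp only [TensorProduct.sum_tmul, map_sum, CMap_tmul]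
  have coactNM_eq : ∀ (x : N) (m : M),
      coactNM (x ⊗ₜ[k] m) = PhiU HH A B ((YN.coact x) ⊗ₜ[k] (YM.coact m)) := by
    intro x m
    obtain ⟨q, m0, m1, hm⟩ := exists_rep (k := k) (YM.coact m)
    obtain ⟨r, n0, n1, hx⟩ := exists_rep (k := k) (YN.coact x)
    rw [hcoactNM x m q m0 m1 hm r n0 n1 hx, hm, hx]
    simp only [TensorProduct.sum_tmul, TensorProduct.tmul_sum, map_sum, PhiU_tmul]
    exact Finset.sum_comm
  have coactMN_eq : ∀ (m : M) (x : N),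
      coactMN (m ⊗ₜ[k] x) = PhiMN HH ((YM.coact m) ⊗ₜ[k] (YN.coact x)) := by
    intro m x
    obtain ⟨q, m0, m1, hm⟩ := exists_rep (k := k) (YM.coact m)
    obtain ⟨r, n0, n1, hx⟩ := exists_rep (k := k) (YN.coact x)
    rw [hcoactMN m x q m0 m1 hm r n0 n1 hx, hm, hx]
    simp only [TensorProduct.sum_tmul, TensorProduct.tmul_sum, map_sum, PhiMN_tmul]
    exact Finset.sum_comm
  have compat_eq : ∀ (h : H) (m : M),
      YM.coact (YM.act h m) = ThetaU HH A B YM.act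
        ((TensorProduct.map LinearMap.id HH.comul (HH.comul h)) ⊗ₜ[k] YM.coact m) := by
    intro h m
    obtain ⟨nn, h1, h2, hh⟩ := exists_rep (k := k) (HH.comul h)
    obtain ⟨pp, h21, h22, hh2⟩ := exists_rep_uniform (k := k) (fun i => HH.comul (h2 i))
    obtain ⟨q, m0, m1, hm⟩ := exists_rep (k := k) (YM.coact m)
    rw [YM.compat h m nn h1 h2 hh pp h21 h22 hh2 q m0 m1 hm, hh, hm]
    simp only [map_sum, TensorProduct.map_tmul, LinearMap.id_coe, id_eq, hh2,
      TensorProduct.sum_tmul, TensorProduct.tmul_sum, ThetaU_tmul]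
    exact (Finset.sum_congr rfl fun i _ => Finset.sum_comm).trans Finset.sum_comm
  have eB : ∀ v : H, HH.a (B.symm (HH.a.symm v)) = B.symm v := by
    intro v
    conv_rhs => rw [← LinearEquiv.apply_symm_apply HH.a v, auto_symm_a hB]
  intro zz
  induction zz using TensorProduct.induction_on with
  | zero => simp
  | add u v hu hv => simp only [map_add, hu, hv]
  | tmul m x =>
    obtain ⟨r, n0, n1, hx⟩ := exists_rep (k := k) (YN.coact x)
    obtain ⟨pd, d1, d2, hd⟩ := exists_rep_uniform (k := k) (fun t => HH.comul (n1 t))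
    obtain ⟨pe, e0, e1, he⟩ := exists_rep_uniform (k := k) (fun t => YN.coact (n0 t))
    obtain ⟨q, w0, w1, hw⟩ := exists_rep (k := k) (YM.coact (YM.mu.symm m))
    -- the comodule Hom-coassociativity for x
    have star : (∑ t, ∑ i, YN.mu.symm (n0 t) ⊗ₜ[k] (d1 t i ⊗ₜ[k] d2 t i))
        = ∑ t, ∑ s, e0 t s ⊗ₜ[k] (e1 t s ⊗ₜ[k] HH.a.symm (n1 t)) := by
      have h2 := congrArg (fun f : N →ₗ[k] N ⊗[k] (H ⊗[k] H) => f x) YN.hom_coact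
      simp only [LinearMap.comp_apply, LinearEquiv.coe_coe] at h2
      rw [hx] at h2
      simpa [map_sum, hd, he, TensorProduct.tmul_sum, TensorProduct.sum_tmul] using h2
    have hσν : ∀ t, YN.coact (YN.mu (n0 t))
        = ∑ s, YN.mu (e0 t s) ⊗ₜ[k] HH.a (e1 t s) := by
      intro t; rw [YN.coact_mu, he t]; simp [map_sum]
    have hτm : YM.coact m = ∑ l, YM.mu (w0 l) ⊗ₜ[k] HH.a (w1 l) := by
      conv_lhs => rw [← LinearEquiv.apply_symm_apply YM.mu m]
      rw [YM.coact_mu, hw]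
      simp [map_sum]
    have hLHS : coactNM (c (m ⊗ₜ[k] x))
        = LL1 HH A B YN.mu YM.act (YM.coact (YM.mu.symm m))
            (∑ t, ∑ s, e0 t s ⊗ₜ[k] (e1 t s ⊗ₜ[k] HH.a.symm (n1 t))) := by
      rw [hc m x r n0 n1 hx, map_sum]
      simp only [coactNM_eq, hσν, compat_eq, map_sum, LL1_tmul, eB,
        TensorProduct.sum_tmul, TensorProduct.tmul_sum]
    have hGw : Gw HH B YN.mu YM.act (YM.coact (YM.mu.symm m))
          (∑ t, ∑ s, e0 t s ⊗ₜ[k] (e1 t s ⊗ₜ[k] HH.a.symm (n1 t)))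
        = ∑ t, ∑ s, ∑ l, (YN.mu (e0 t s) ⊗ₜ[k] YM.act (B.symm (e1 t s)) (w0 l)) ⊗ₜ[k]
            HH.mul (n1 t) (HH.a (w1 l)) := by
      simp only [map_sum, Gw_apply]
      rw [hw]
      simp only [TensorProduct.tmul_sum, map_sum, GU_tmul, LinearEquiv.apply_symm_apply]
    have rot : ∀ (F : Fin r → Fin pe → Fin q → (N ⊗[k] M) ⊗[k] H),
        ∑ t, ∑ s, ∑ l, F t s l = ∑ t, ∑ l, ∑ s, F t s l := fun F =>
      Finset.sum_congr rfl fun t _ => Finset.sum_comm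
    have hRHS : (TensorProduct.map c LinearMap.id) (coactMN (m ⊗ₜ[k] x))
        = ∑ t, ∑ l, ∑ s, (YN.mu (e0 t s) ⊗ₜ[k] YM.act (B.symm (e1 t s)) (w0 l)) ⊗ₜ[k]
            HH.mul (n1 t) (HH.a (w1 l)) := by
      rw [coactMN_eq, hτm, hx]
      simp only [TensorProduct.sum_tmul, TensorProduct.tmul_sum, map_sum, PhiMN_tmul,
        TensorProduct.map_tmul, LinearMap.id_coe, id_eq, c_eq, he,
        CMap_tmul, LinearEquiv.symm_apply_apply]
    calc coactNM (c (m ⊗ₜ[k] x))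
        = LL1 HH A B YN.mu YM.act (YM.coact (YM.mu.symm m))
            (∑ t, ∑ s, e0 t s ⊗ₜ[k] (e1 t s ⊗ₜ[k] HH.a.symm (n1 t))) := hLHS
      _ = LL1 HH A B YN.mu YM.act (YM.coact (YM.mu.symm m))
            (∑ t, ∑ i, YN.mu.symm (n0 t) ⊗ₜ[k] (d1 t i ⊗ₜ[k] d2 t i)) := by rw [star]
      _ = ∑ t, LL1 HH A B YN.mu YM.act (YM.coact (YM.mu.symm m))
            (YN.mu.symm (n0 t) ⊗ₜ[k] HH.comul (n1 t)) := by
          rw [map_sum]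
          refine Finset.sum_congr rfl fun t _ => ?_
          rw [hd t, TensorProduct.tmul_sum, map_sum]
      _ = ∑ t, Gw HH B YN.mu YM.act (YM.coact (YM.mu.symm m))
            (YN.mu.symm (n0 t) ⊗ₜ[k] HH.comul (n1 t)) :=
          Finset.sum_congr rfl fun t _ =>
            key_colinear HH A B hA hB YN.mu YM.act _ _ _
      _ = Gw HH B YN.mu YM.act (YM.coact (YM.mu.symm m))
            (∑ t, ∑ i, YN.mu.symm (n0 t) ⊗ₜ[k] (d1 t i ⊗ₜ[k] d2 t i)) := by
          rw [map_sum]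
          refine Finset.sum_congr rfl fun t _ => ?_
          rw [hd t, TensorProduct.tmul_sum, map_sum]
      _ = (TensorProduct.map c LinearMap.id) (coactMN (m ⊗ₜ[k] x)) := by
          rw [star, hGw, hRHS, rot]
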